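/- Let 𝔽 be a field, θ a probability distribution on [k], and f : V_1×⋯×V_k → 𝔽 a nonzero multilinear map. Then ρ^θ(f) = min_F H_θ(supp_F f), where the minimum is over all k-tuples F of complete flags of V_1,…,V_k. -/

import Mathlib

open scoped BigOperators
open scoped Classical
open scoped ComplexOrder

noncomputable section

namespace CVZ

variable {k : ℕ}

/-- A concrete `k`-tensor over `F` with index types `I i`: the coefficient array
(in the standard bases) of a multilinear map `V₁ × ⋯ × V_k → F` with `dim V_i = |I i|`. -/
abbrev Tensor (F : Type*) (I : Fin k → Type*) : Type _ := (∀ i, I i) → F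

section Basic

variable {F : Type*} [Field F] {I J : Fin k → Type*}
  [∀ i, Fintype (I i)] [∀ i, DecidableEq (I i)]
  [∀ i, Fintype (J i)] [∀ i, DecidableEq (J i)]

/-- Coefficient array of the restriction `f ∘ (A₁, …, A_k)`, where `A_i : W_i → V_i`
is given by the matrix `A i`. -/
def restrictBy (A : ∀ i, Matrix (I i) (J i) F) (t : Tensor F I) : Tensor F J :=
  fun β => ∑ α : ∀ i, I i, (∏ i, A i (α i) (β i)) * t α

/-- `t` restricts to `s`. -/
def Restricts (t : Tensor F I) (s : Tensor F J) : Prop :=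
  ∃ A : ∀ i, Matrix (I i) (J i) F, restrictBy A t = s

/-- A choice of bases of the spaces `V_i`, encoded as a tuple of invertible matrices. -/
def IsBasisTuple (B : ∀ i, Matrix (I i) (I i) F) : Prop := ∀ i, IsUnit (B i)

/-- Support of a tensor (with respect to the standard bases). -/
def supp (t : Tensor F I) : Set (∀ i, I i) := {α | t α ≠ 0}

end Basic

section Entropy

/-- A probability distribution on the finite set `X`. -/
def IsProbDist {X : Type*} [Fintype X] (P : X → ℝ) : Prop :=
  (∀ x, 0 ≤ P x) ∧ ∑ x, P x = 1

/-- Base-2 Shannon entropy. -/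
def H2 {X : Type*} [Fintype X] (P : X → ℝ) : ℝ :=
  ∑ x, -(P x * Real.logb 2 (P x))

variable {I : Fin k → Type*} [∀ i, Fintype (I i)] [∀ i, DecidableEq (I i)]

/-- The `i`-th marginal of a distribution on a product set. -/
def marg (P : (∀ i, I i) → ℝ) (i : Fin k) : I i → ℝ :=
  fun a => ∑ α : ∀ i, I i, if α i = a then P α else 0

/-- `H_θ(P)`, the `θ`-weighted average of the marginal entropies. -/
def Hw (θ : Fin k → ℝ) (P : (∀ i, I i) → ℝ) : ℝ :=
  ∑ i, θ i * H2 (marg P i)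

/-- `H_θ(Φ)`, the supremum of `H_θ(P)` over distributions `P` supported on `Φ`. -/
def HwSet (θ : Fin k → ℝ) (Φ : Set (∀ i, I i)) : ℝ :=
  sSup {h | ∃ P : (∀ i, I i) → ℝ, IsProbDist P ∧ (∀ α, P α ≠ 0 → α ∈ Φ) ∧ h = Hw θ P}

/-- Maximal points of a subset of the product order. -/
def maxPoints [∀ i, LinearOrder (I i)] (Φ : Set (∀ i, I i)) : Set (∀ i, I i) :=
  {α | α ∈ Φ ∧ ∀ β ∈ Φ, ¬ α < β}

end Entropy

section SuppFunc

variable {F : Type*} [Field F] {I : Fin k → Type*} [∀ i, Fintype (I i)] [∀ i, DecidableEq (I i)]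

/-- The logarithmic Strassen upper support functional `ρ^θ`. -/
def rhoUpper (θ : Fin k → ℝ) (t : Tensor F I) : ℝ :=
  sInf {h | ∃ B : ∀ i, Matrix (I i) (I i) F, IsBasisTuple B ∧
    h = HwSet θ (supp (restrictBy B t))}

/-- The Strassen upper support functional `ζ^θ`. -/
def zetaUpper (θ : Fin k → ℝ) (t : Tensor F I) : ℝ :=
  if t = 0 then 0 else (2 : ℝ) ^ rhoUpper θ t

/-- The logarithmic Strassen lower support functional `ρ_θ`. -/
def rhoLower [∀ i, LinearOrder (I i)] (θ : Fin k → ℝ) (t : Tensor F I) : ℝ :=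
  sSup {h | ∃ B : ∀ i, Matrix (I i) (I i) F, IsBasisTuple B ∧
    h = HwSet θ (maxPoints (supp (restrictBy B t)))}

/-- The Strassen lower support functional `ζ_θ`. -/
def zetaLower [∀ i, LinearOrder (I i)] (θ : Fin k → ℝ) (t : Tensor F I) : ℝ :=
  if t = 0 then 0 else (2 : ℝ) ^ rhoLower θ t

/-- The instability of a tensor. -/
def instab (t : Tensor F I) : ℝ :=
  sSup {ε : ℝ | 0 ≤ ε ∧ ∃ B : ∀ i, Matrix (I i) (I i) F, IsBasisTuple B ∧
    ∃ w : ∀ i, I i → ℝ, (∀ i x, 0 ≤ w i x) ∧ (∀ i, ∃ x, w i x ≠ 0) ∧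
      ∀ a ∈ supp (restrictBy B t), ∑ i, w i (a i) ≤
        ∑ i, ((∑ x : I i, w i x) / (Fintype.card (I i) : ℝ) - ε * ⨆ x : I i, w i x)}

end SuppFunc

section Ops

variable {F : Type*} [Field F]

/-- The unit tensor `⟨r⟩`. -/
def unitTensor (F : Type*) [Field F] (k r : ℕ) : Tensor F (fun _ : Fin k => Fin r) :=
  fun α => if ∀ i j : Fin k, α i = α j then 1 else 0

variable {n m : Fin k → ℕ}

/-- Direct sum of two tensors, with the concatenated (naturally ordered) bases. -/
def dirSumFin (s : Tensor F fun i => Fin (n i)) (t : Tensor F fun i => Fin (m i)) :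
    Tensor F fun i => Fin (n i + m i) :=
  fun α =>
    (if h : ∀ i, (α i : ℕ) < n i then s (fun i => ⟨(α i : ℕ), h i⟩) else 0) +
    (if h : ∀ i, n i ≤ (α i : ℕ) then
      t (fun i => ⟨(α i : ℕ) - n i, by have h1 := (α i).isLt; have h2 := h i; omega⟩) else 0)

/-- Tensor (Kronecker) product of two tensors, with the product bases ordered naturally. -/
def tensMulFin (s : Tensor F fun i => Fin (n i)) (t : Tensor F fun i => Fin (m i)) :
    Tensor F fun i => Fin (n i * m i) :=
  fun α =>
    s (fun i => ⟨(α i : ℕ) / m i, by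
      have h := (α i).isLt
      exact Nat.div_lt_of_lt_mul (lt_of_lt_of_le h (Nat.mul_comm (n i) (m i)).le)⟩) *
    t (fun i => ⟨(α i : ℕ) % m i, by
      have h := (α i).isLt
      have hpos : 0 < n i * m i := Nat.lt_of_le_of_lt (Nat.zero_le _) h
      have hm : 0 < m i := by
        rcases Nat.eq_zero_or_pos (m i) with h0 | h0
        · simp [h0] at hpos
        · exact h0
      exact Nat.mod_lt _ hm⟩)

/-- The `N`-th tensor power of a tensor (grouping the legs into `k` groups). -/
def tpow {I : Fin k → Type*} (t : Tensor F I) (N : ℕ) : Tensor F fun i => Fin N → I i :=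
  fun α => ∏ j : Fin N, t fun i => α i j

end Ops

section Subrank

variable {F : Type*} [Field F] {I : Fin k → Type*} [∀ i, Fintype (I i)] [∀ i, DecidableEq (I i)]

/-- The subrank `Q(t)` of a tensor: the largest `r` with `⟨r⟩ ≤ t`. -/
def Qtensor (t : Tensor F I) : ℕ :=
  sSup {r : ℕ | Restricts t (unitTensor F k r)}

/-- A slice: a tensor of the form `v ⊗ w` with `v` in the `j`-th leg. -/
def IsSlice (s : Tensor F I) : Prop :=
  ∃ (j : Fin k) (v : I j → F) (w : (∀ i : {i : Fin k // i ≠ j}, I i.1) → F),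
    ∀ α, s α = v (α j) * w (fun i => α i.1)

/-- The slice rank of a tensor. -/
def sliceRank (t : Tensor F I) : ℕ :=
  sInf {r : ℕ | ∃ c : Fin r → Tensor F I, (∀ a, IsSlice (c a)) ∧ t = ∑ a, c a}

end Subrank

section Combinatorial

variable {I : Fin k → Type*}

/-- A diagonal: any two distinct elements differ in all coordinates. -/
def IsDiagonal (D : Set (∀ i, I i)) : Prop :=
  ∀ a ∈ D, ∀ b ∈ D, a ≠ b → ∀ i, a i ≠ b i

/-- The `i`-th projection of a set of tuples. -/
def projSet (D : Set (∀ i, I i)) (i : Fin k) : Set (I i) := {x | ∃ a ∈ D, a i = x}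

/-- A free diagonal in `Φ`: a diagonal `D` with `D = Φ ∩ (D₁ × ⋯ × D_k)`. -/
def IsFreeDiagonal (D Φ : Set (∀ i, I i)) : Prop :=
  IsDiagonal D ∧ D = Φ ∩ {a | ∀ i, a i ∈ projSet D i}

/-- The (combinatorial) subrank of a set: the maximal size of a free diagonal. -/
def Qset (Φ : Set (∀ i, I i)) : ℕ :=
  sSup {r : ℕ | ∃ D : Set (∀ i, I i), IsFreeDiagonal D Φ ∧ D.ncard = r}

/-- The `N`-fold coordinatewise power of a set of tuples. -/
def setPow (Φ : Set (∀ i, I i)) (N : ℕ) : Set (∀ i, Fin N → I i) :=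
  {α | ∀ j : Fin N, (fun i => α i j) ∈ Φ}

/-- A tight set. -/
def TightSet (Φ : Set (∀ i, I i)) : Prop :=
  ∃ u : ∀ i, I i → ℤ, (∀ i, Function.Injective (u i)) ∧ ∀ α ∈ Φ, ∑ i, u i (α i) = 0

/-- `Φ` is a combinatorial degeneration of `Ψ` (written `Ψ ⊵ Φ`). -/
def CombDegen (Ψ Φ : Set (∀ i, I i)) : Prop :=
  Φ ⊆ Ψ ∧ ∃ u : ∀ i, I i → ℤ,
    (∀ α ∈ Φ, ∑ i, u i (α i) = 0) ∧ ∀ α ∈ Ψ, α ∉ Φ → 0 < ∑ i, u i (α i)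

end Combinatorial

/-- A tight tensor: some basis tuple gives a tight support. -/
def TightTensor {F : Type*} [Field F] {I : Fin k → Type*} [∀ i, Fintype (I i)]
    [∀ i, DecidableEq (I i)] (t : Tensor F I) : Prop :=
  ∃ B : ∀ i, Matrix (I i) (I i) F, IsBasisTuple B ∧ TightSet (supp (restrictBy B t))

/-- A complete (decreasing) flag of subspaces, `W 0 = ⊤` and `dim (W j) = dim V − j`. -/
def IsCompleteFlag (F : Type*) [Field F] {V : Type*} [AddCommGroup V] [Module F V]
    (W : ℕ → Submodule F V) : Prop :=
  Antitone W ∧ W 0 = ⊤ ∧ ∀ j : ℕ, Module.finrank F (W j) = Module.finrank F V - j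

/-- Evaluation of (the multilinear map associated with) `t` at a tuple of vectors. -/
def eval {F : Type*} [Field F] {I : Fin k → Type*} [∀ i, Fintype (I i)] [∀ i, DecidableEq (I i)]
    (t : Tensor F I) (v : ∀ i, I i → F) : F :=
  ∑ α : ∀ i, I i, (∏ i, v i (α i)) * t α

/-- The support of `t` with respect to a tuple of complete flags. -/
def suppFlag {F : Type*} [Field F] {n : Fin k → ℕ} (t : Tensor F fun i => Fin (n i))
    (W : ∀ i, ℕ → Submodule F (Fin (n i) → F)) : Set (∀ i, Fin (n i)) :=
  {α | ∃ v : ∀ i, Fin (n i) → F, (∀ i, v i ∈ W i (α i : ℕ)) ∧ eval t v ≠ 0}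

section Quantum

variable {I : Fin k → Type*} [∀ i, Fintype (I i)] [∀ i, DecidableEq (I i)]

/-- Von Neumann entropy (base 2) of a Hermitian matrix. -/
def vnEntropy {d : Type*} [Fintype d] [DecidableEq d] (ρ : Matrix d d ℂ) : ℝ :=
  if h : ρ.IsHermitian then ∑ x, -(h.eigenvalues x * Real.logb 2 (h.eigenvalues x)) else 0

/-- The `j`-th marginal (reduced density matrix) of the pure state `|t⟩⟨t| / ⟨t|t⟩`. -/
def margMat (t : Tensor ℂ I) (j : Fin k) : Matrix (I j) (I j) ℂ :=
  fun a b =>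
    (∑ α : ∀ i, I i, ∑ β : ∀ i, I i,
      if α j = a ∧ β j = b ∧ (∀ i, i ≠ j → α i = β i) then t α * star (t β) else 0) /
    ∑ α : ∀ i, I i, t α * star (t α)

/-- The logarithmic lower quantum functional `E_θ` for `θ` a distribution on `[k]`. -/
def Ewq (θ : Fin k → ℝ) (t : Tensor ℂ I) : ℝ :=
  sSup {h | ∃ A : ∀ i, Matrix (I i) (I i) ℂ, IsBasisTuple A ∧
    h = ∑ j, θ j * vnEntropy (margMat (restrictBy A t) j)}

/-- The marginal (reduced density matrix) on the legs in `S` of the pure state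
`|t⟩⟨t| / ⟨t|t⟩`. -/
def margMatSet (t : Tensor ℂ I) (S : Finset (Fin k)) :
    Matrix (∀ i : {x : Fin k // x ∈ S}, I i.1) (∀ i : {x : Fin k // x ∈ S}, I i.1) ℂ :=
  fun a b =>
    (∑ α : ∀ i, I i, ∑ β : ∀ i, I i,
      if (∀ (i : Fin k) (hi : i ∈ S), α i = a ⟨i, hi⟩ ∧ β i = b ⟨i, hi⟩) ∧
         (∀ i, i ∉ S → α i = β i)
      then t α * star (t β) else 0) /
    ∑ α : ∀ i, I i, t α * star (t α)

/-- A probability distribution on the bipartitions `{S, S̄}` of `[k]` (encoded by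
choosing a representative `S` for each bipartition occurring in the support). -/
def IsBipDist (θ : Finset (Fin k) → ℝ) : Prop :=
  (∀ S, 0 ≤ θ S) ∧ (∀ S, θ S ≠ 0 → S.Nonempty ∧ Sᶜ.Nonempty) ∧
    ∑ S : Finset (Fin k), θ S = 1

/-- The logarithmic lower quantum functional `E_θ` for `θ` a distribution on bipartitions. -/
def EwqBip (θ : Finset (Fin k) → ℝ) (t : Tensor ℂ I) : ℝ :=
  sSup {h | ∃ A : ∀ i, Matrix (I i) (I i) ℂ, IsBasisTuple A ∧
    h = ∑ S : Finset (Fin k), θ S * vnEntropy (margMatSet (restrictBy A t) S)}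

/-- The lower quantum functional `F_θ`. -/
def FwqBip (θ : Finset (Fin k) → ℝ) (t : Tensor ℂ I) : ℝ :=
  if t = 0 then 0 else (2 : ℝ) ^ EwqBip θ t

/-- Degeneration: `t` lies in the closure of the `GL × ⋯ × GL`-orbit of `s`. -/
def Degen (s t : Tensor ℂ I) : Prop :=
  t ∈ closure {u : Tensor ℂ I | ∃ A : ∀ i, Matrix (I i) (I i) ℂ,
    IsBasisTuple A ∧ restrictBy A s = u}

end Quantum

/-- Trace norm of a complex matrix: `Tr √(AᴴA)`. -/
def traceNorm {d : Type*} [Fintype d] [DecidableEq d] (A : Matrix d d ℂ) : ℝ :=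
  (((Matrix.posSemidef_conjTranspose_mul_self A).1.eigenvectorUnitary.1 *
      Matrix.diagonal (((↑) : ℝ → ℂ) ∘ (√·) ∘ (Matrix.posSemidef_conjTranspose_mul_self A).1.eigenvalues) *
      (star (Matrix.posSemidef_conjTranspose_mul_self A).1.eigenvectorUnitary : Matrix d d ℂ)).trace).re

/-- `conjIter ρ X j = X_j ⋯ X_2 X_1 ρ X_1 X_2 ⋯ X_j`. -/
def conjIter {d : Type*} [Fintype d] (ρ : Matrix d d ℂ) {n : ℕ}
    (X : Fin n → Matrix d d ℂ) : ℕ → Matrix d d ℂ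
  | 0 => ρ
  | (j + 1) => if h : j < n then X ⟨j, h⟩ * conjIter ρ X j * X ⟨j, h⟩ else conjIter ρ X j

/-- A tricolored sum-free set in `G × G × G`. -/
def IsTriColoredSumFree {G : Type*} [AddCommGroup G] (Γ : Set (G × G × G)) : Prop :=
  (∀ a ∈ Γ, ∀ b ∈ Γ, a ≠ b → a.1 ≠ b.1 ∧ a.2.1 ≠ b.2.1 ∧ a.2.2 ≠ b.2.2) ∧
  ∀ x y z : G, (∃ a ∈ Γ, a.1 = x) → (∃ a ∈ Γ, a.2.1 = y) → (∃ a ∈ Γ, a.2.2 = z) →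
    (x + y + z = 0 ↔ (x, y, z) ∈ Γ)

/-- The maximal size `s₃(G)` of a tricolored sum-free set in `G × G × G`. -/
def s3 (G : Type*) [AddCommGroup G] : ℕ :=
  sSup {r : ℕ | ∃ Γ : Set (G × G × G), IsTriColoredSumFree Γ ∧ Γ.ncard = r}

/-- Binary entropy function (base 2), with the convention `0 · log 0 = 0`. -/
def binH (p : ℝ) : ℝ := -(p * Real.logb 2 p) - (1 - p) * Real.logb 2 (1 - p)

/-! ### Auxiliary development for statement1 -/

section Statement1Aux

open Real Finset Filter Topology

variable {k : ℕ}

/-! #### Entropy basics -/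

section EntBasics

variable {X : Type*} [Fintype X]

lemma H2_le_cross (p r : X → ℝ) (hp0 : ∀ x, 0 ≤ p x) (hr0 : ∀ x, 0 ≤ r x)
    (hp1 : ∑ x, p x = 1) (hr1 : ∑ x, r x ≤ 1) (hpr : ∀ x, p x ≠ 0 → r x ≠ 0) :
    H2 p ≤ ∑ x, p x * -Real.logb 2 (r x) := by
  have hlog2 : (0:ℝ) < Real.log 2 := Real.log_pos one_lt_two
  have key : ∑ x, (p x * Real.log (r x) - p x * Real.log (p x)) ≤ 0 := by
    have h1 : ∑ x, (p x * Real.log (r x) - p x * Real.log (p x)) ≤ ∑ x, (r x - p x) := by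
      apply Finset.sum_le_sum
      intro x _
      rcases eq_or_lt_of_le (hp0 x) with h | h
      · simp [← h, hr0 x]
      · have hr : 0 < r x := lt_of_le_of_ne (hr0 x) (Ne.symm (hpr x (ne_of_gt h)))
        have hlog : Real.log (r x / p x) ≤ r x / p x - 1 :=
          Real.log_le_sub_one_of_pos (div_pos hr h)
        rw [Real.log_div (ne_of_gt hr) (ne_of_gt h)] at hlog
        have h2 := mul_le_mul_of_nonneg_left hlog h.le
        have h3 : p x * (r x / p x - 1) = r x - p x := by field_simp
        nlinarith
    have h2 : ∑ x, (r x - p x) = (∑ x, r x) - 1 := by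
      rw [Finset.sum_sub_distrib, hp1]
    linarith
  rw [← sub_nonneg]
  have hrw : ∑ x, p x * -Real.logb 2 (r x) - H2 p
      = -((∑ x, (p x * Real.log (r x) - p x * Real.log (p x))) / Real.log 2) := by
    simp only [H2]
    rw [← Finset.sum_sub_distrib, ← neg_div, eq_div_iff (ne_of_gt hlog2), Finset.sum_mul,
      ← Finset.sum_neg_distrib]
    refine Finset.sum_congr rfl fun x _ => ?_
    simp only [Real.logb]
    field_simp
    ring
  rw [hrw]
  exact neg_nonneg.mpr (div_nonpos_of_nonpos_of_nonneg key hlog2.le)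

lemma H2_nonneg (p : X → ℝ) (hp0 : ∀ x, 0 ≤ p x) (hp1 : ∀ x, p x ≤ 1) : 0 ≤ H2 p := by
  apply Finset.sum_nonneg
  intro x _
  have h1 : Real.logb 2 (p x) ≤ 0 := Real.logb_nonpos one_lt_two (hp0 x) (hp1 x)
  have h2 := mul_nonpos_of_nonneg_of_nonpos (hp0 x) h1
  linarith

lemma H2_le_card (p : X → ℝ) (hp : IsProbDist p) :
    H2 p ≤ Real.logb 2 (Fintype.card X) := by
  have hcard0 : Fintype.card X ≠ 0 := by
    intro h
    have hempty : IsEmpty X := Fintype.card_eq_zero_iff.mp h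
    have h2 := hp.2
    rw [Finset.univ_eq_empty, Finset.sum_empty] at h2
    exact one_ne_zero h2.symm
  have hcard : (Fintype.card X : ℝ) ≠ 0 := Nat.cast_ne_zero.mpr hcard0
  have h := H2_le_cross p (fun _ => (Fintype.card X : ℝ)⁻¹) hp.1
    (fun _ => by positivity) hp.2
    (by rw [Finset.sum_const, nsmul_eq_mul, Finset.card_univ, mul_inv_cancel₀ hcard])
    (fun x _ => by positivity)
  calc H2 p ≤ ∑ x, p x * -Real.logb 2 ((Fintype.card X : ℝ)⁻¹) := h
    _ = Real.logb 2 (Fintype.card X) := by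
        rw [Real.logb_inv, neg_neg, ← Finset.sum_mul, hp.2, one_mul]

lemma H2_mix {X' : Type*} [Fintype X'] [DecidableEq X'] (p : X' → ℝ) (hp0 : ∀ x, 0 ≤ p x)
    (hp1 : ∑ x, p x = 1) (b : X') {ε : ℝ} (h0 : 0 < ε) (h1 : ε < 1) :
    (1 - ε) * H2 p + ε * -Real.logb 2 (p b + ε)
      ≤ H2 (fun x => (1 - ε) * p x + ε * (if b = x then 1 else 0)) := by
  set m : X' → ℝ := fun x => (1 - ε) * p x + ε * (if b = x then 1 else 0) with hm
  have hm0 : ∀ x, 0 ≤ m x := by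
    intro x
    have hpx := hp0 x
    simp only [hm]
    split_ifs <;> nlinarith
  have hm1 : ∑ x, m x = 1 := by
    simp only [hm]
    rw [Finset.sum_add_distrib, ← Finset.mul_sum, ← Finset.mul_sum, hp1, Finset.sum_ite_eq]
    simp
  have hmb_pos : 0 < m b := by
    have hpb := hp0 b
    simp only [hm, if_pos rfl, eq_self_iff_true, if_true]
    nlinarith
  have hgibbs : H2 p ≤ ∑ x, p x * -Real.logb 2 (m x) := by
    apply H2_le_cross p m hp0 hm0 hp1 (le_of_eq hm1)
    intro x hx
    have hpx : 0 < p x := lt_of_le_of_ne (hp0 x) (Ne.symm hx)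
    have hmx : 0 < m x := by
      simp only [hm]
      split_ifs <;> nlinarith
    exact ne_of_gt hmx
  have hH2m : H2 m = (1 - ε) * (∑ x, p x * -Real.logb 2 (m x)) + ε * -Real.logb 2 (m b) := by
    simp only [H2]
    have hb : ∀ x : X', -(m x * Real.logb 2 (m x))
        = (1 - ε) * (p x * -Real.logb 2 (m x))
          + (if b = x then ε * -Real.logb 2 (m x) else 0) := by
      intro x
      simp only [hm]
      split_ifs <;> ring
    rw [Finset.sum_congr rfl fun x _ => hb x, Finset.sum_add_distrib, ← Finset.mul_sum,
      Finset.sum_ite_eq]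
    simp
  have hmb_le : m b ≤ p b + ε := by
    have hpb := hp0 b
    simp only [hm, if_pos rfl, eq_self_iff_true, if_true]
    nlinarith
  have hlogmb : -Real.logb 2 (p b + ε) ≤ -Real.logb 2 (m b) := by
    apply neg_le_neg
    exact Real.logb_le_logb_of_le one_lt_two hmb_pos hmb_le
  have hineq1 := mul_le_mul_of_nonneg_left hgibbs (by linarith : (0:ℝ) ≤ 1 - ε)
  have hineq2 := mul_le_mul_of_nonneg_left hlogmb h0.le
  linarith [hH2m]

end EntBasics

/-! #### Marginals -/

section Marg

variable {I : Fin k → Type*} [∀ i, Fintype (I i)] [∀ i, DecidableEq (I i)]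

lemma marg_nonneg {P : (∀ i, I i) → ℝ} (hP0 : ∀ α, 0 ≤ P α) (i : Fin k) (a : I i) :
    0 ≤ marg P i a := by
  unfold marg
  apply Finset.sum_nonneg
  intro α _
  split_ifs
  · exact hP0 α
  · exact le_rfl

lemma sum_marg (P : (∀ i, I i) → ℝ) (i : Fin k) : ∑ a, marg P i a = ∑ α, P α := by
  unfold marg
  rw [Finset.sum_comm]
  refine Finset.sum_congr rfl fun α _ => ?_
  simp

lemma marg_le_one {P : (∀ i, I i) → ℝ} (hP : IsProbDist P) (i : Fin k) (a : I i) :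
    marg P i a ≤ 1 := by
  have h1 : marg P i a ≤ ∑ b, marg P i b :=
    Finset.single_le_sum (fun b _ => marg_nonneg hP.1 i b) (Finset.mem_univ a)
  rw [sum_marg, hP.2] at h1
  exact h1

lemma sum_marg_mul (P : (∀ i, I i) → ℝ) (i : Fin k) (c : I i → ℝ) :
    ∑ a, marg P i a * c a = ∑ α, P α * c (α i) := by
  unfold marg
  have h1 : ∀ a : I i, (∑ α, if α i = a then P α else 0) * c a
      = ∑ α, (if α i = a then P α * c a else 0) := by
    intro a
    rw [Finset.sum_mul]
    refine Finset.sum_congr rfl fun α _ => ?_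
    split_ifs <;> simp
  rw [Finset.sum_congr rfl fun a _ => h1 a, Finset.sum_comm]
  refine Finset.sum_congr rfl fun α _ => ?_
  simp

lemma exists_of_marg_ne_zero {P : (∀ i, I i) → ℝ} {i : Fin k} {a : I i}
    (h : marg P i a ≠ 0) : ∃ α, P α ≠ 0 ∧ α i = a := by
  by_contra hc
  push_neg at hc
  apply h
  unfold marg
  apply Finset.sum_eq_zero
  intro α _
  by_cases he : α i = a
  · simp only [he, if_true]
    by_contra hne
    exact (hc α hne) he
  · simp [he]

lemma marg_lin (P Q : (∀ i, I i) → ℝ) (c d : ℝ) (i : Fin k) (a : I i) :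
    marg (fun α => c * P α + d * Q α) i a = c * marg P i a + d * marg Q i a := by
  unfold marg
  rw [Finset.mul_sum, Finset.mul_sum, ← Finset.sum_add_distrib]
  refine Finset.sum_congr rfl fun α _ => ?_
  split_ifs <;> simp

lemma marg_delta (β : ∀ i, I i) (i : Fin k) (a : I i) :
    marg (fun α => if α = β then (1:ℝ) else 0) i a = if β i = a then 1 else 0 := by
  unfold marg
  rw [Finset.sum_eq_single β]
  · simp
  · intro α _ hne
    simp [hne]
  · simp

lemma isProbDist_delta (β : ∀ i, I i) :
    IsProbDist (fun α => if α = β then (1:ℝ) else 0) := by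
  constructor
  · intro α
    show (0:ℝ) ≤ if α = β then 1 else 0
    split_ifs <;> norm_num
  · simp

lemma Hw_nonneg {θ : Fin k → ℝ} (hθ0 : ∀ i, 0 ≤ θ i) {P : (∀ i, I i) → ℝ}
    (hP : IsProbDist P) : 0 ≤ Hw θ P := by
  apply Finset.sum_nonneg
  intro i _
  exact mul_nonneg (hθ0 i)
    (H2_nonneg _ (marg_nonneg hP.1 i) (marg_le_one hP i))

lemma Hw_le_bound {θ : Fin k → ℝ} (hθ0 : ∀ i, 0 ≤ θ i) {P : (∀ i, I i) → ℝ}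
    (hP : IsProbDist P) :
    Hw θ P ≤ ∑ i, θ i * Real.logb 2 (Fintype.card (I i)) := by
  apply Finset.sum_le_sum
  intro i _
  apply mul_le_mul_of_nonneg_left _ (hθ0 i)
  exact H2_le_card _ ⟨marg_nonneg hP.1 i, by rw [sum_marg, hP.2]⟩

/-! #### HwSet basics -/

lemma bddAbove_HwSetVals (θ : Fin k → ℝ) (hθ0 : ∀ i, 0 ≤ θ i) (Φ : Set (∀ i, I i)) :
    BddAbove {h | ∃ P : (∀ i, I i) → ℝ, IsProbDist P ∧ (∀ α, P α ≠ 0 → α ∈ Φ) ∧ h = Hw θ P} := by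
  refine ⟨∑ i, θ i * Real.logb 2 (Fintype.card (I i)), ?_⟩
  rintro h ⟨P, hP, _, rfl⟩
  exact Hw_le_bound hθ0 hP

lemma Hw_le_HwSet {θ : Fin k → ℝ} (hθ0 : ∀ i, 0 ≤ θ i) {Φ : Set (∀ i, I i)}
    {P : (∀ i, I i) → ℝ} (hP : IsProbDist P) (hs : ∀ α, P α ≠ 0 → α ∈ Φ) :
    Hw θ P ≤ HwSet θ Φ :=
  le_csSup (bddAbove_HwSetVals θ hθ0 Φ) ⟨P, hP, hs, rfl⟩

lemma HwSet_nonneg {θ : Fin k → ℝ} (hθ0 : ∀ i, 0 ≤ θ i) (Φ : Set (∀ i, I i)) :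
    0 ≤ HwSet θ Φ := by
  apply Real.sSup_nonneg
  rintro h ⟨P, hP, _, rfl⟩
  exact Hw_nonneg hθ0 hP

lemma HwSet_le {θ : Fin k → ℝ} {Φ : Set (∀ i, I i)} {c : ℝ} (hc : 0 ≤ c)
    (h : ∀ P : (∀ i, I i) → ℝ, IsProbDist P → (∀ α, P α ≠ 0 → α ∈ Φ) → Hw θ P ≤ c) :
    HwSet θ Φ ≤ c := by
  apply Real.sSup_le _ hc
  rintro x ⟨P, hP, hs, rfl⟩
  exact h P hP hs

lemma HwSet_mono {θ : Fin k → ℝ} (hθ0 : ∀ i, 0 ≤ θ i) {Φ Ψ : Set (∀ i, I i)}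
    (hsub : Φ ⊆ Ψ) : HwSet θ Φ ≤ HwSet θ Ψ := by
  apply Real.sSup_le _ (HwSet_nonneg hθ0 Ψ)
  rintro x ⟨P, hP, hs, rfl⟩
  exact Hw_le_HwSet hθ0 hP fun α hα => hsub (hs α hα)

/-! #### Existence of a maximizer -/

lemma continuous_Hw (θ : Fin k → ℝ) : Continuous fun P : (∀ i, I i) → ℝ => Hw θ P := by
  unfold Hw H2
  apply continuous_finset_sum
  intro i _
  apply Continuous.mul continuous_const
  apply continuous_finset_sum
  intro x _
  apply Continuous.neg
  have hm : Continuous fun P : (∀ i, I i) → ℝ => marg P i x := by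
    unfold marg
    apply continuous_finset_sum
    intro α _
    by_cases h : α i = x
    · simpa [h] using continuous_apply α
    · simpa [h] using (continuous_const : Continuous fun _ : (∀ i, I i) → ℝ => (0:ℝ))
  have hml : Continuous fun t : ℝ => t * Real.logb 2 t := by
    have heq : (fun t : ℝ => t * Real.logb 2 t) = fun t : ℝ => t * Real.log t / Real.log 2 := by
      funext t
      simp only [Real.logb]
      ring
    rw [heq]
    exact Real.continuous_mul_log.div_const _
  exact hml.comp hm

lemma exists_maximizer (θ : Fin k → ℝ) (Φ : Set (∀ i, I i)) (hΦ : Φ.Nonempty) :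
    ∃ P : (∀ i, I i) → ℝ, IsProbDist P ∧ (∀ α, P α ≠ 0 → α ∈ Φ) ∧
      ∀ Q : (∀ i, I i) → ℝ, IsProbDist Q → (∀ α, Q α ≠ 0 → α ∈ Φ) → Hw θ Q ≤ Hw θ P := by
  classical
  set D : Set ((∀ i, I i) → ℝ) :=
    {P | IsProbDist P ∧ ∀ α, P α ≠ 0 → α ∈ Φ} with hD
  obtain ⟨β, hβ⟩ := hΦ
  have hDne : D.Nonempty := by
    refine ⟨fun α => if α = β then (1:ℝ) else 0, isProbDist_delta β, ?_⟩
    intro α hα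
    by_cases h : α = β
    · rw [h]; exact hβ
    · simp [h] at hα
  have hclosed : IsClosed D := by
    have h1 : IsClosed {P : (∀ i, I i) → ℝ | ∀ x, 0 ≤ P x} := by
      rw [Set.setOf_forall]
      exact isClosed_iInter fun x => isClosed_le continuous_const (continuous_apply x)
    have h2 : IsClosed {P : (∀ i, I i) → ℝ | ∑ x, P x = 1} :=
      isClosed_eq (continuous_finset_sum _ fun x _ => continuous_apply x) continuous_const
    have h3 : IsClosed {P : (∀ i, I i) → ℝ | ∀ α, α ∉ Φ → P α = 0} := by
      rw [Set.setOf_forall]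
      refine isClosed_iInter fun α => ?_
      by_cases h : α ∈ Φ
      · simp only [h, not_true_eq_false, false_implies]
        exact isClosed_univ
      · have heq : {P : (∀ i, I i) → ℝ | α ∉ Φ → P α = 0} = {P | P α = 0} := by
          ext P
          simp [h]
        rw [heq]
        exact isClosed_eq (continuous_apply α) continuous_const
    have hDeq : D = ({P : (∀ i, I i) → ℝ | ∀ x, 0 ≤ P x} ∩ {P | ∑ x, P x = 1})
        ∩ {P | ∀ α, α ∉ Φ → P α = 0} := by
      ext P
      simp only [hD, Set.mem_setOf_eq, Set.mem_inter_iff, IsProbDist]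
      constructor
      · rintro ⟨⟨ha, hb⟩, hc⟩
        exact ⟨⟨ha, hb⟩, fun α hα => by_contra fun hne => hα (hc α hne)⟩
      · rintro ⟨⟨ha, hb⟩, hc⟩
        exact ⟨⟨ha, hb⟩, fun α hα => by_contra fun hne => hα (hc α hne)⟩
    rw [hDeq]
    exact (h1.inter h2).inter h3
  have hcomp : IsCompact D := by
    apply IsCompact.of_isClosed_subset (isCompact_univ_pi fun _ => isCompact_Icc) hclosed
    intro P hP
    intro x _
    refine ⟨hP.1.1 x, ?_⟩
    have h1 : P x ≤ ∑ y, P y :=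
      Finset.single_le_sum (fun y _ => hP.1.1 y) (Finset.mem_univ x)
    rw [hP.1.2] at h1
    exact h1
  obtain ⟨P, hPD, hPmax⟩ := hcomp.exists_isMaxOn hDne (continuous_Hw θ).continuousOn
  exact ⟨P, hPD.1, hPD.2, fun Q hQ hQs => hPmax ⟨hQ, hQs⟩⟩

/-! #### KKT conditions for the maximizer -/

lemma kkt_eps (θ : Fin k → ℝ) (hθ : IsProbDist θ) {Φ : Set (∀ i, I i)} {P : (∀ i, I i) → ℝ}
    (hP : IsProbDist P) (hPs : ∀ α, P α ≠ 0 → α ∈ Φ)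
    (hmax : ∀ Q : (∀ i, I i) → ℝ, IsProbDist Q → (∀ α, Q α ≠ 0 → α ∈ Φ) → Hw θ Q ≤ Hw θ P)
    {β : ∀ i, I i} (hβ : β ∈ Φ) {ε : ℝ} (h0 : 0 < ε) (h1 : ε < 1) :
    ∑ i, θ i * -Real.logb 2 (marg P i (β i) + ε) ≤ Hw θ P := by
  set Q : (∀ i, I i) → ℝ := fun α => (1 - ε) * P α + ε * (if α = β then (1:ℝ) else 0) with hQdef
  have hQ : IsProbDist Q := by
    constructor
    · intro α
      have hPα := hP.1 α
      simp only [hQdef]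
      split_ifs <;> nlinarith
    · simp only [hQdef]
      rw [Finset.sum_add_distrib, ← Finset.mul_sum, ← Finset.mul_sum, hP.2,
        (isProbDist_delta β).2]
      ring
  have hQs : ∀ α, Q α ≠ 0 → α ∈ Φ := by
    intro α hα
    by_cases h : α = β
    · rw [h]; exact hβ
    · apply hPs
      intro hPα
      apply hα
      simp [hQdef, h, hPα]
  have hmargQ : ∀ i, marg Q i = fun a => (1 - ε) * marg P i a
      + ε * (if β i = a then 1 else 0) := by
    intro i
    funext a
    simp only [hQdef]
    rw [marg_lin P (fun α => if α = β then (1:ℝ) else 0) (1 - ε) ε i a, marg_delta]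
  have hkey : ∀ i, (1 - ε) * H2 (marg P i) + ε * -Real.logb 2 (marg P i (β i) + ε)
      ≤ H2 (marg Q i) := by
    intro i
    rw [hmargQ i]
    exact H2_mix (marg P i) (marg_nonneg hP.1 i) (by rw [sum_marg, hP.2]) (β i) h0 h1
  have hsum : ∑ i, θ i * ((1 - ε) * H2 (marg P i) + ε * -Real.logb 2 (marg P i (β i) + ε))
      ≤ Hw θ Q := by
    apply Finset.sum_le_sum
    intro i _
    exact mul_le_mul_of_nonneg_left (hkey i) (hθ.1 i)
  have hexp : ∑ i, θ i * ((1 - ε) * H2 (marg P i) + ε * -Real.logb 2 (marg P i (β i) + ε))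
      = (1 - ε) * Hw θ P + ε * ∑ i, θ i * -Real.logb 2 (marg P i (β i) + ε) := by
    unfold Hw
    rw [Finset.mul_sum, Finset.mul_sum, ← Finset.sum_add_distrib]
    refine Finset.sum_congr rfl fun i _ => ?_
    ring
  have hQP : Hw θ Q ≤ Hw θ P := hmax Q hQ hQs
  rw [hexp] at hsum
  have hfin : ε * ∑ i, θ i * -Real.logb 2 (marg P i (β i) + ε) ≤ ε * Hw θ P := by
    nlinarith
  exact le_of_mul_le_mul_left hfin h0

lemma kkt_pos (θ : Fin k → ℝ) (hθ : IsProbDist θ) {Φ : Set (∀ i, I i)} {P : (∀ i, I i) → ℝ}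
    (hP : IsProbDist P) (hPs : ∀ α, P α ≠ 0 → α ∈ Φ)
    (hmax : ∀ Q : (∀ i, I i) → ℝ, IsProbDist Q → (∀ α, Q α ≠ 0 → α ∈ Φ) → Hw θ Q ≤ Hw θ P)
    {β : ∀ i, I i} (hβ : β ∈ Φ) {i0 : Fin k} (hi0 : θ i0 ≠ 0) :
    0 < marg P i0 (β i0) := by
  have hθ0 : 0 < θ i0 := lt_of_le_of_ne (hθ.1 i0) (Ne.symm hi0)
  by_contra hcon
  have hm0 : marg P i0 (β i0) = 0 :=
    le_antisymm (not_lt.mp hcon) (marg_nonneg hP.1 i0 (β i0))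
  have hHw : 0 ≤ Hw θ P := Hw_nonneg hθ.1 hP
  set T : ℝ := (Hw θ P + 2) / θ i0 with hT
  have hTpos : 0 < T := div_pos (by linarith) hθ0
  set ε : ℝ := (2:ℝ) ^ (-T) with hε
  have hε0 : 0 < ε := Real.rpow_pos_of_pos two_pos _
  have hε1 : ε < 1 := Real.rpow_lt_one_of_one_lt_of_neg one_lt_two (by linarith)
  have hlogε : Real.logb 2 ε = -T := Real.logb_rpow two_pos (by norm_num)
  have hkkt := kkt_eps θ hθ hP hPs hmax hβ hε0 hε1
  have hterm : ∀ i : Fin k, -θ i ≤ θ i * -Real.logb 2 (marg P i (β i) + ε) := by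
    intro i
    have hmnn := marg_nonneg hP.1 i (β i)
    have hpos : 0 < marg P i (β i) + ε := by linarith
    have hle2 : marg P i (β i) + ε ≤ 2 := by
      have := marg_le_one hP i (β i)
      linarith
    have hlog : Real.logb 2 (marg P i (β i) + ε) ≤ 1 := by
      have h2 : Real.logb 2 (marg P i (β i) + ε) ≤ Real.logb 2 2 :=
        Real.logb_le_logb_of_le one_lt_two hpos hle2
      simpa using h2
    nlinarith [hθ.1 i]
  have hi0term : θ i0 * -Real.logb 2 (marg P i0 (β i0) + ε) = θ i0 * T := by
    rw [hm0, zero_add, hlogε]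
    ring
  have hsplit : θ i0 * T + ∑ i ∈ Finset.univ.erase i0, θ i * -Real.logb 2 (marg P i (β i) + ε)
      = ∑ i, θ i * -Real.logb 2 (marg P i (β i) + ε) := by
    rw [← hi0term]
    exact Finset.add_sum_erase Finset.univ
      (fun i => θ i * -Real.logb 2 (marg P i (β i) + ε)) (Finset.mem_univ i0)
  have herase : -(1:ℝ)
      ≤ ∑ i ∈ Finset.univ.erase i0, θ i * -Real.logb 2 (marg P i (β i) + ε) := by
    have ha : ∑ i ∈ Finset.univ.erase i0, -θ i
        ≤ ∑ i ∈ Finset.univ.erase i0, θ i * -Real.logb 2 (marg P i (β i) + ε) :=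
      Finset.sum_le_sum fun i _ => hterm i
    have hb : ∑ i ∈ Finset.univ.erase i0, θ i ≤ 1 := by
      rw [← hθ.2]
      exact Finset.sum_le_sum_of_subset_of_nonneg (Finset.erase_subset _ _)
        fun i _ _ => hθ.1 i
    have hcnt : ∑ i ∈ Finset.univ.erase i0, -θ i = -∑ i ∈ Finset.univ.erase i0, θ i :=
      Finset.sum_neg_distrib _
    linarith
  have hTval : θ i0 * T = Hw θ P + 2 := by
    rw [hT]
    field_simp
  linarith [hsplit, herase, hkkt, hTval]

lemma kkt_ineq (θ : Fin k → ℝ) (hθ : IsProbDist θ) {Φ : Set (∀ i, I i)} {P : (∀ i, I i) → ℝ}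
    (hP : IsProbDist P) (hPs : ∀ α, P α ≠ 0 → α ∈ Φ)
    (hmax : ∀ Q : (∀ i, I i) → ℝ, IsProbDist Q → (∀ α, Q α ≠ 0 → α ∈ Φ) → Hw θ Q ≤ Hw θ P)
    {β : ∀ i, I i} (hβ : β ∈ Φ) :
    ∑ i, θ i * -Real.logb 2 (marg P i (β i)) ≤ Hw θ P := by
  have htend : Tendsto (fun ε : ℝ => ∑ i, θ i * -Real.logb 2 (marg P i (β i) + ε))
      (𝓝[>] 0) (𝓝 (∑ i, θ i * -Real.logb 2 (marg P i (β i)))) := by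
    apply tendsto_finset_sum
    intro i _
    rcases eq_or_ne (θ i) 0 with h | h
    · simp only [h, zero_mul]
      exact tendsto_const_nhds
    · have hpos : 0 < marg P i (β i) := kkt_pos θ hθ hP hPs hmax hβ h
      have ht1 : Tendsto (fun ε : ℝ => marg P i (β i) + ε) (𝓝[>] 0)
          (𝓝 (marg P i (β i))) := by
        have ht0 : Tendsto (fun ε : ℝ => marg P i (β i) + ε) (𝓝 0)
            (𝓝 (marg P i (β i) + 0)) := (continuous_const.add continuous_id).tendsto 0
        rw [add_zero] at ht0
        exact ht0.mono_left nhdsWithin_le_nhds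
      have ht2 : ContinuousAt (Real.logb 2) (marg P i (β i)) :=
        Real.continuousAt_logb (ne_of_gt hpos)
      exact (Filter.Tendsto.comp ht2 ht1).neg.const_mul _
  apply le_of_tendsto htend
  filter_upwards [Ioo_mem_nhdsGT_of_mem
    (show (0:ℝ) ∈ Set.Ico (0:ℝ) 1 by constructor <;> norm_num)]
  intro ε hε
  exact kkt_eps θ hθ hP hPs hmax hβ hε.1 hε.2

/-! #### The down-closure bound -/

lemma dc_bound [∀ i, LinearOrder (I i)]
    (θ : Fin k → ℝ) (hθ : IsProbDist θ) (Φ : Set (∀ i, I i))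
    (P : (∀ i, I i) → ℝ) (hP : IsProbDist P) (hPs : ∀ α, P α ≠ 0 → α ∈ Φ)
    (hmax : ∀ Q : (∀ i, I i) → ℝ, IsProbDist Q → (∀ α, Q α ≠ 0 → α ∈ Φ) → Hw θ Q ≤ Hw θ P)
    (hmono : ∀ i, ∀ a b : I i, a ≤ b → marg P i b ≤ marg P i a)
    (Q : (∀ i, I i) → ℝ) (hQ : IsProbDist Q)
    (hQs : ∀ α, Q α ≠ 0 → ∃ γ ∈ Φ, ∀ i, α i ≤ γ i) :
    Hw θ Q ≤ Hw θ P := by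
  have hpos : ∀ γ ∈ Φ, ∀ i : Fin k, θ i ≠ 0 → 0 < marg P i (γ i) :=
    fun γ hγ i hi => kkt_pos θ hθ hP hPs hmax hγ hi
  have hkkt : ∀ γ ∈ Φ, ∑ i, θ i * -Real.logb 2 (marg P i (γ i)) ≤ Hw θ P :=
    fun γ hγ => kkt_ineq θ hθ hP hPs hmax hγ
  have hQP : ∀ i : Fin k, ∀ x : I i, θ i ≠ 0 → marg Q i x ≠ 0 → 0 < marg P i x := by
    intro i x hθi hx
    obtain ⟨α, hα, rfl⟩ := exists_of_marg_ne_zero hx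
    obtain ⟨γ, hγ, hle⟩ := hQs α hα
    exact lt_of_lt_of_le (hpos γ hγ i hθi) (hmono i _ _ (hle i))
  have h1 : ∀ i : Fin k, θ i * H2 (marg Q i)
      ≤ θ i * ∑ x, marg Q i x * -Real.logb 2 (marg P i x) := by
    intro i
    rcases eq_or_ne (θ i) 0 with h | h
    · simp [h]
    · apply mul_le_mul_of_nonneg_left _ (hθ.1 i)
      apply H2_le_cross (marg Q i) (marg P i) (marg_nonneg hQ.1 i) (marg_nonneg hP.1 i)
        (by rw [sum_marg, hQ.2]) (le_of_eq (by rw [sum_marg, hP.2]))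
      intro x hx
      exact ne_of_gt (hQP i x h hx)
  have h2 : Hw θ Q ≤ ∑ i, θ i * ∑ x, marg Q i x * -Real.logb 2 (marg P i x) :=
    Finset.sum_le_sum fun i _ => h1 i
  have h3 : ∑ i, θ i * ∑ x, marg Q i x * -Real.logb 2 (marg P i x)
      = ∑ α, Q α * ∑ i, θ i * -Real.logb 2 (marg P i (α i)) := by
    have hswap : ∀ i : Fin k, ∑ x, marg Q i x * -Real.logb 2 (marg P i x)
        = ∑ α, Q α * -Real.logb 2 (marg P i (α i)) :=
      fun i => sum_marg_mul Q i _
    calc ∑ i, θ i * ∑ x, marg Q i x * -Real.logb 2 (marg P i x)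
        = ∑ i : Fin k, ∑ α : ∀ i, I i, θ i * (Q α * -Real.logb 2 (marg P i (α i))) := by
          refine Finset.sum_congr rfl fun i _ => ?_
          rw [hswap i, Finset.mul_sum]
      _ = ∑ α : ∀ i, I i, ∑ i : Fin k, θ i * (Q α * -Real.logb 2 (marg P i (α i))) :=
          Finset.sum_comm
      _ = ∑ α : ∀ i, I i, Q α * ∑ i, θ i * -Real.logb 2 (marg P i (α i)) := by
          refine Finset.sum_congr rfl fun α _ => ?_
          rw [Finset.mul_sum]
          exact Finset.sum_congr rfl fun i _ => by ring
  have h4 : ∀ α : ∀ i, I i, Q α * (∑ i, θ i * -Real.logb 2 (marg P i (α i)))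
      ≤ Q α * Hw θ P := by
    intro α
    rcases eq_or_ne (Q α) 0 with h | h
    · simp [h]
    · apply mul_le_mul_of_nonneg_left _ (hQ.1 α)
      obtain ⟨γ, hγ, hle⟩ := hQs α h
      have hstep : ∑ i, θ i * -Real.logb 2 (marg P i (α i))
          ≤ ∑ i, θ i * -Real.logb 2 (marg P i (γ i)) := by
        apply Finset.sum_le_sum
        intro i _
        rcases eq_or_ne (θ i) 0 with hθi | hθi
        · simp [hθi]
        · apply mul_le_mul_of_nonneg_left _ (hθ.1 i)
          apply neg_le_neg
          exact Real.logb_le_logb_of_le one_lt_two (hpos γ hγ i hθi) (hmono i _ _ (hle i))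
      exact le_trans hstep (hkkt γ hγ)
  calc Hw θ Q ≤ ∑ i, θ i * ∑ x, marg Q i x * -Real.logb 2 (marg P i x) := h2
    _ = ∑ α, Q α * ∑ i, θ i * -Real.logb 2 (marg P i (α i)) := h3
    _ ≤ ∑ α, Q α * Hw θ P := Finset.sum_le_sum fun α _ => h4 α
    _ = Hw θ P := by rw [← Finset.sum_mul, hQ.2, one_mul]

/-! #### Relabeling by coordinatewise bijections -/

lemma marg_relabel (σ : ∀ i, I i ≃ I i) (P : (∀ i, I i) → ℝ) (i : Fin k) (a : I i) :
    marg (fun α => P fun j => σ j (α j)) i a = marg P i (σ i a) := by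
  unfold marg
  rw [← Equiv.sum_comp (Equiv.piCongrRight σ)
    (fun γ : ∀ j, I j => if γ i = σ i a then P γ else 0)]
  refine Finset.sum_congr rfl fun α _ => ?_
  have happ : (Equiv.piCongrRight σ) α = fun j => σ j (α j) := rfl
  rw [happ]
  by_cases h : α i = a
  · simp [h]
  · have hne : σ i (α i) ≠ σ i a := fun hc => h ((σ i).injective hc)
    simp [h, hne]

lemma isProbDist_relabel (σ : ∀ i, I i ≃ I i) {P : (∀ i, I i) → ℝ} (hP : IsProbDist P) :
    IsProbDist (fun α : ∀ i, I i => P fun j => σ j (α j)) := by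
  constructor
  · intro α
    exact hP.1 _
  · rw [← hP.2]
    exact Equiv.sum_comp (Equiv.piCongrRight σ) P

lemma Hw_relabel (θ : Fin k → ℝ) (σ : ∀ i, I i ≃ I i) (P : (∀ i, I i) → ℝ) :
    Hw θ (fun α : ∀ i, I i => P fun j => σ j (α j)) = Hw θ P := by
  unfold Hw
  refine Finset.sum_congr rfl fun i _ => ?_
  congr 1
  unfold H2
  rw [← Equiv.sum_comp (σ i) (fun a => -(marg P i a * Real.logb 2 (marg P i a)))]
  refine Finset.sum_congr rfl fun a _ => ?_
  rw [marg_relabel]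

end Marg

/-! #### Linear algebra: flags from bases and bases from flags -/

section FlagAlg

open Real Finset Matrix

variable {k : ℕ} {F : Type*} [Field F]

lemma eval_expand {I : Fin k → Type*} [∀ i, Fintype (I i)] [∀ i, DecidableEq (I i)]
    {T : Fin k → Type*} [∀ i, Fintype (T i)]
    (t : Tensor F I) (c : ∀ i, T i → F) (u : ∀ i, T i → (I i → F)) :
    eval t (fun i => ∑ s : T i, c i s • u i s)
      = ∑ L : ∀ i, T i, (∏ i, c i (L i)) * eval t (fun i => u i (L i)) := by
  unfold eval
  have h1 : ∀ α : ∀ i, I i, (∏ i, (∑ s : T i, c i s • u i s) (α i))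
      = ∑ L : ∀ i, T i, ∏ i, c i (L i) * u i (L i) (α i) := by
    intro α
    rw [← Fintype.prod_sum (fun i (s : T i) => c i s * u i s (α i))]
    refine Finset.prod_congr rfl fun i _ => ?_
    rw [Finset.sum_apply]
    refine Finset.sum_congr rfl fun s _ => ?_
    simp [smul_eq_mul]
  calc ∑ α : ∀ i, I i, (∏ i, (∑ s : T i, c i s • u i s) (α i)) * t α
      = ∑ α : ∀ i, I i, ∑ L : ∀ i, T i, (∏ i, c i (L i) * u i (L i) (α i)) * t α := by
        refine Finset.sum_congr rfl fun α _ => ?_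
        rw [h1 α, Finset.sum_mul]
    _ = ∑ L : ∀ i, T i, ∑ α : ∀ i, I i, (∏ i, c i (L i) * u i (L i) (α i)) * t α :=
        Finset.sum_comm
    _ = ∑ L : ∀ i, T i, (∏ i, c i (L i)) * ∑ α : ∀ i, I i, (∏ i, u i (L i) (α i)) * t α := by
        refine Finset.sum_congr rfl fun L _ => ?_
        rw [Finset.mul_sum]
        refine Finset.sum_congr rfl fun α _ => ?_
        rw [Finset.prod_mul_distrib]
        ring

lemma restrictBy_restrictBy {I : Fin k → Type*} [∀ i, Fintype (I i)] [∀ i, DecidableEq (I i)]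
    (A B : ∀ i, Matrix (I i) (I i) F) (t : Tensor F I) :
    restrictBy A (restrictBy B t) = restrictBy (fun i => B i * A i) t := by
  funext β
  unfold restrictBy
  calc ∑ γ : ∀ i, I i, (∏ i, A i (γ i) (β i)) * ∑ α : ∀ i, I i, (∏ i, B i (α i) (γ i)) * t α
      = ∑ γ : ∀ i, I i, ∑ α : ∀ i, I i,
          ((∏ i, A i (γ i) (β i)) * (∏ i, B i (α i) (γ i))) * t α := by
        refine Finset.sum_congr rfl fun γ _ => ?_
        rw [Finset.mul_sum]
        refine Finset.sum_congr rfl fun α _ => ?_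
        ring
    _ = ∑ α : ∀ i, I i, ∑ γ : ∀ i, I i,
          ((∏ i, A i (γ i) (β i)) * (∏ i, B i (α i) (γ i))) * t α := Finset.sum_comm
    _ = ∑ α : ∀ i, I i, (∏ i, (B i * A i) (α i) (β i)) * t α := by
        refine Finset.sum_congr rfl fun α _ => ?_
        rw [← Finset.sum_mul]
        congr 1
        have h1 : ∀ γ : ∀ i, I i, (∏ i, A i (γ i) (β i)) * (∏ i, B i (α i) (γ i))
            = ∏ i, B i (α i) (γ i) * A i (γ i) (β i) := by
          intro γ
          rw [Finset.prod_mul_distrib]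
          ring
        rw [Finset.sum_congr rfl fun γ _ => h1 γ,
          ← Fintype.prod_sum (fun i (g : I i) => B i (α i) g * A i g (β i))]
        refine Finset.prod_congr rfl fun i _ => ?_
        rw [Matrix.mul_apply]

lemma restrictBy_one {I : Fin k → Type*} [∀ i, Fintype (I i)] [∀ i, DecidableEq (I i)]
    (t : Tensor F I) : restrictBy (fun _ => (1 : Matrix _ _ F)) t = t := by
  funext β
  unfold restrictBy
  rw [Finset.sum_eq_single β]
  · have : ∀ i, (1 : Matrix (I i) (I i) F) (β i) (β i) = 1 := fun i => Matrix.one_apply_eq _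
    rw [Finset.prod_congr rfl fun i _ => this i]
    simp
  · intro α _ hne
    have : ∃ i, α i ≠ β i := by
      by_contra hc
      push_neg at hc
      exact hne (funext hc)
    obtain ⟨i, hi⟩ := this
    apply mul_eq_zero_of_left
    apply Finset.prod_eq_zero (Finset.mem_univ i)
    exact Matrix.one_apply_ne hi
  · simp

lemma restrictBy_ne_zero {I : Fin k → Type*} [∀ i, Fintype (I i)] [∀ i, DecidableEq (I i)]
    {B : ∀ i, Matrix (I i) (I i) F} (hB : IsBasisTuple B) {t : Tensor F I} (ht : t ≠ 0) :
    restrictBy B t ≠ 0 := by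
  intro h0
  apply ht
  have hC : ∀ i, ∃ C : Matrix (I i) (I i) F, B i * C = 1 := fun i => (hB i).exists_right_inv
  choose C hC using hC
  have h1 : restrictBy C (restrictBy B t) = t := by
    rw [restrictBy_restrictBy]
    have : (fun i => B i * C i) = fun _ => (1 : Matrix _ _ F) := funext fun i => hC i
    rw [this, restrictBy_one]
  rw [← h1, h0]
  funext β
  unfold restrictBy
  simp

/-- The `j`-th member of the standard flag associated with the columns of `B`. -/
def flagOf {m : ℕ} (B : Matrix (Fin m) (Fin m) F) (j : ℕ) : Submodule F (Fin m → F) :=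
  Submodule.span F (Set.range fun s : {b : Fin m // j ≤ (b : ℕ)} => (fun a => B a s.1))

lemma card_tail_subtype (m j : ℕ) : Fintype.card {b : Fin m // j ≤ (b : ℕ)} = m - j := by
  rcases le_or_gt m j with h | h
  · have : IsEmpty {b : Fin m // j ≤ (b : ℕ)} := by
      constructor
      rintro ⟨b, hb⟩
      have := b.isLt
      omega
    rw [Fintype.card_eq_zero]
    omega
  · have e : {b : Fin m // j ≤ (b : ℕ)} ≃ Fin (m - j) :=
      { toFun := fun s => ⟨(s.1 : ℕ) - j, by have := s.1.isLt; have := s.2; omega⟩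
        invFun := fun t => ⟨⟨(t : ℕ) + j, by have := t.isLt; omega⟩, by simp⟩
        left_inv := by
          rintro ⟨b, hb⟩
          ext
          simp
          omega
        right_inv := by
          intro t
          ext
          simp }
    rw [Fintype.card_congr e, Fintype.card_fin]

lemma li_cols {m : ℕ} {B : Matrix (Fin m) (Fin m) F} (hB : IsUnit B) (j : ℕ) :
    LinearIndependent F (fun s : {b : Fin m // j ≤ (b : ℕ)} => (fun a => B a s.1 : Fin m → F)) := by
  have h : LinearIndependent F (fun b : Fin m => Bᵀ b) :=
    Matrix.linearIndependent_cols_iff_isUnit.mpr hB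
  have h2 := h.comp (fun s : {b : Fin m // j ≤ (b : ℕ)} => s.1) Subtype.val_injective
  have he : (fun s : {b : Fin m // j ≤ (b : ℕ)} => (fun a => B a s.1 : Fin m → F))
      = (fun b : Fin m => Bᵀ b) ∘ (fun s : {b : Fin m // j ≤ (b : ℕ)} => s.1) := rfl
  rw [he]
  exact h2

lemma finrank_flagOf {m : ℕ} {B : Matrix (Fin m) (Fin m) F} (hB : IsUnit B) (j : ℕ) :
    Module.finrank F (flagOf B j) = m - j := by
  rw [flagOf, finrank_span_eq_card (li_cols hB j), card_tail_subtype]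

lemma antitone_flagOf {m : ℕ} (B : Matrix (Fin m) (Fin m) F) : Antitone (flagOf B) := by
  intro j j' hle
  apply Submodule.span_le.mpr
  rintro x ⟨s, rfl⟩
  exact Submodule.subset_span ⟨⟨s.1, le_trans hle s.2⟩, rfl⟩

lemma isCompleteFlag_flagOf {m : ℕ} {B : Matrix (Fin m) (Fin m) F} (hB : IsUnit B) :
    IsCompleteFlag F (flagOf B) := by
  refine ⟨antitone_flagOf B, ?_, ?_⟩
  · apply Submodule.eq_top_of_finrank_eq
    rw [finrank_flagOf hB, Module.finrank_pi, Fintype.card_fin]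
    omega
  · intro j
    rw [finrank_flagOf hB, Module.finrank_pi, Fintype.card_fin]

lemma mem_flagOf_col {m : ℕ} (B : Matrix (Fin m) (Fin m) F) (b : Fin m) :
    (fun a => B a b) ∈ flagOf B (b : ℕ) :=
  Submodule.subset_span ⟨⟨b, le_refl _⟩, rfl⟩

/-- Support with respect to the standard flag of `B` is contained in the down-closure of the
support with respect to the basis `B`. -/
lemma suppFlag_flagOf_subset {n : Fin k → ℕ} (B : ∀ i, Matrix (Fin (n i)) (Fin (n i)) F)
    (t : Tensor F fun i => Fin (n i)) :
    suppFlag t (fun i => flagOf (B i)) ⊆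
      {α | ∃ γ, γ ∈ supp (restrictBy B t) ∧ ∀ i, α i ≤ γ i} := by
  rintro α ⟨v, hv, hev⟩
  have hmem : ∀ i, ∃ c : {b : Fin (n i) // (α i : ℕ) ≤ (b : ℕ)} → F,
      ∑ s, c s • (fun a => B i a s.1 : Fin (n i) → F) = v i := by
    intro i
    exact (Submodule.mem_span_range_iff_exists_fun F).mp (hv i)
  choose c hc using hmem
  have hveq : v = fun i => ∑ s, c i s • (fun a => B i a s.1 : Fin (n i) → F) :=
    funext fun i => (hc i).symm
  rw [hveq] at hev
  rw [eval_expand] at hev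
  have hL : ∃ L : ∀ i, {b : Fin (n i) // (α i : ℕ) ≤ (b : ℕ)},
      (∏ i, c i (L i)) * eval t (fun i => (fun a => B i a (L i).1)) ≠ 0 := by
    by_contra hcon
    push_neg at hcon
    exact hev (Finset.sum_eq_zero fun L _ => hcon L)
  obtain ⟨L, hL⟩ := hL
  refine ⟨fun i => (L i).1, ?_, fun i => ?_⟩
  · have heq : eval t (fun i => (fun a => B i a (L i).1)) = restrictBy B t (fun i => (L i).1) :=
      rfl
    have := right_ne_zero_of_mul hL
    rw [heq] at this
    exact this
  · exact (L i).2

/-- Every complete flag admits an adapted basis. -/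
lemma exists_adapted {m : ℕ} (W : ℕ → Submodule F (Fin m → F)) (hW : IsCompleteFlag F W) :
    ∃ B : Matrix (Fin m) (Fin m) F, IsUnit B ∧ ∀ b : Fin m, (fun a => B a b) ∈ W (b : ℕ) := by
  have hrank : ∀ j : ℕ, Module.finrank F (W j) = m - j := by
    intro j
    have h := hW.2.2 j
    rwa [Module.finrank_pi, Fintype.card_fin] at h
  have hex : ∀ b : Fin m, ∃ w : Fin m → F, w ∈ W (b : ℕ) ∧ w ∉ W ((b : ℕ) + 1) := by
    intro b
    have hle : W ((b : ℕ) + 1) ≤ W (b : ℕ) := hW.1 (Nat.le_succ _)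
    have hne : W ((b : ℕ) + 1) ≠ W (b : ℕ) := by
      intro h
      have h1 := hrank ((b : ℕ) + 1)
      have h2 := hrank (b : ℕ)
      rw [h] at h1
      rw [h1] at h2
      have := b.isLt
      omega
    obtain ⟨w, hw1, hw2⟩ := SetLike.exists_of_lt (lt_of_le_of_ne hle hne)
    exact ⟨w, hw1, hw2⟩
  choose w hw1 hw2 using hex
  refine ⟨Matrix.of fun a b => w b a, ?_, fun b => hw1 b⟩
  rw [← Matrix.linearIndependent_cols_iff_isUnit]
  have hcols : (fun b : Fin m => (Matrix.of fun a b => w b a)ᵀ b) = w := by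
    funext b
    funext a
    rfl
  rw [show (Matrix.of fun a b => w b a).col = w from hcols]
  rw [Fintype.linearIndependent_iff]
  intro g hg
  by_contra hne
  push_neg at hne
  obtain ⟨b1, hb1⟩ := hne
  have hSne : (Finset.univ.filter (fun b => g b ≠ 0)).Nonempty :=
    ⟨b1, by simp [hb1]⟩
  set b0 := (Finset.univ.filter (fun b => g b ≠ 0)).min' hSne with hb0def
  have hb0S : b0 ∈ Finset.univ.filter (fun b => g b ≠ 0) := Finset.min'_mem _ hSne
  have hg0 : g b0 ≠ 0 := by
    have := Finset.mem_filter.mp hb0S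
    exact this.2
  have hmem : (∑ b ∈ Finset.univ.erase b0, g b • w b) ∈ W ((b0 : ℕ) + 1) := by
    apply Submodule.sum_mem
    intro b hb
    have hbne : b ≠ b0 := Finset.ne_of_mem_erase hb
    rcases eq_or_ne (g b) 0 with h | h
    · rw [h, zero_smul]
      exact Submodule.zero_mem _
    · have hbS : b ∈ Finset.univ.filter (fun b => g b ≠ 0) := by simp [h]
      have hble : b0 ≤ b := Finset.min'_le _ _ hbS
      have hlt : (b0 : ℕ) + 1 ≤ (b : ℕ) := by
        have : b0 < b := lt_of_le_of_ne hble (Ne.symm hbne)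
        exact this
      exact Submodule.smul_mem _ _ (hW.1 hlt (hw1 b))
  have hsum : g b0 • w b0 = -∑ b ∈ Finset.univ.erase b0, g b • w b := by
    have h := hg
    rw [← Finset.add_sum_erase _ _ (Finset.mem_univ b0)] at h
    exact eq_neg_of_add_eq_zero_left h
  apply hw2 b0
  have : w b0 = (g b0)⁻¹ • (g b0 • w b0) := by
    rw [smul_smul, inv_mul_cancel₀ hg0, one_smul]
  rw [this, hsum]
  exact Submodule.smul_mem _ _ (Submodule.neg_mem _ hmem)

lemma isUnit_submatrix_perm {m : ℕ} {B : Matrix (Fin m) (Fin m) F} (hB : IsUnit B)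
    (σ : Equiv.Perm (Fin m)) : IsUnit (B.submatrix id σ) := by
  rw [← Matrix.linearIndependent_cols_iff_isUnit]
  have h : LinearIndependent F (fun b : Fin m => Bᵀ b) :=
    Matrix.linearIndependent_cols_iff_isUnit.mpr hB
  have he : (fun b : Fin m => (B.submatrix id σ)ᵀ b) = (fun b : Fin m => Bᵀ b) ∘ σ := rfl
  rw [show (B.submatrix id σ).col = (fun b : Fin m => Bᵀ b) ∘ σ from he]
  exact h.comp σ σ.injective

end FlagAlg

/-! #### Main argument -/

section MainArg

open Real Finset

variable {k : ℕ} {F : Type*} [Field F] {n : Fin k → ℕ}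

lemma restrictBy_submatrix_perm (B : ∀ i, Matrix (Fin (n i)) (Fin (n i)) F)
    (σ : ∀ i, Equiv.Perm (Fin (n i))) (t : Tensor F fun i => Fin (n i)) (β : ∀ i, Fin (n i)) :
    restrictBy (fun i => (B i).submatrix id (σ i)) t β
      = restrictBy B t (fun i => σ i (β i)) := rfl

lemma hard_step (θ : Fin k → ℝ) (hθ : IsProbDist θ) (f : Tensor F fun i => Fin (n i))
    (hf : f ≠ 0) (B : ∀ i, Matrix (Fin (n i)) (Fin (n i)) F) (hB : IsBasisTuple B) :
    ∃ W : ∀ i, ℕ → Submodule F (Fin (n i) → F), (∀ i, IsCompleteFlag F (W i)) ∧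
      HwSet θ (suppFlag f W) ≤ HwSet θ (supp (restrictBy B f)) := by
  have hs : restrictBy B f ≠ 0 := restrictBy_ne_zero hB hf
  obtain ⟨β0, hβ0⟩ := Function.ne_iff.mp hs
  have hΦne : (supp (restrictBy B f)).Nonempty := ⟨β0, by simpa [supp] using hβ0⟩
  obtain ⟨P, hP, hPs, hmax⟩ := exists_maximizer θ (supp (restrictBy B f)) hΦne
  set σ : ∀ i, Equiv.Perm (Fin (n i)) := fun i => Tuple.sort (fun x => -(marg P i x)) with hσ
  have hsort : ∀ i, Monotone ((fun x => -(marg P i x)) ∘ (σ i)) :=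
    fun i => Tuple.monotone_sort _
  set B' : ∀ i, Matrix (Fin (n i)) (Fin (n i)) F := fun i => (B i).submatrix id (σ i) with hB'
  have hB'unit : IsBasisTuple B' := fun i => isUnit_submatrix_perm (hB i) (σ i)
  have hΦ'mem : ∀ α : ∀ i, Fin (n i),
      α ∈ supp (restrictBy B' f) ↔ (fun i => σ i (α i)) ∈ supp (restrictBy B f) := by
    intro α
    simp only [supp, Set.mem_setOf_eq, hB', restrictBy_submatrix_perm]
  set P' : (∀ i, Fin (n i)) → ℝ := fun α => P (fun i => σ i (α i)) with hP'def
  have hP' : IsProbDist P' := isProbDist_relabel (fun i => (σ i)) hP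
  have hP's : ∀ α, P' α ≠ 0 → α ∈ supp (restrictBy B' f) := by
    intro α hα
    exact (hΦ'mem α).mpr (hPs _ hα)
  have hHw : Hw θ P' = Hw θ P := Hw_relabel θ (fun i => σ i) P
  have hmax' : ∀ Q : (∀ i, Fin (n i)) → ℝ, IsProbDist Q →
      (∀ α, Q α ≠ 0 → α ∈ supp (restrictBy B' f)) → Hw θ Q ≤ Hw θ P' := by
    intro Q hQ hQs
    set τ : ∀ i, Fin (n i) ≃ Fin (n i) := fun i => (σ i).symm with hτ
    set Q' : (∀ i, Fin (n i)) → ℝ := fun α => Q (fun i => τ i (α i)) with hQ'def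
    have hQ' : IsProbDist Q' := isProbDist_relabel τ hQ
    have hQ's : ∀ α, Q' α ≠ 0 → α ∈ supp (restrictBy B f) := by
      intro α hα
      have h1 := hQs _ hα
      have h2 := (hΦ'mem _).mp h1
      have h3 : (fun i => σ i (τ i (α i))) = α :=
        funext fun i => (σ i).apply_symm_apply (α i)
      rwa [h3] at h2
    have hle := hmax Q' hQ' hQ's
    have hQQ' : Hw θ Q' = Hw θ Q := Hw_relabel θ τ Q
    calc Hw θ Q = Hw θ Q' := hQQ'.symm
      _ ≤ Hw θ P := hle
      _ = Hw θ P' := hHw.symm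
  have hmono : ∀ i, ∀ a b : Fin (n i), a ≤ b → marg P' i b ≤ marg P' i a := by
    intro i a b hab
    have h1 : marg P' i a = marg P i (σ i a) := marg_relabel (fun j => σ j) P i a
    have h2 : marg P' i b = marg P i (σ i b) := marg_relabel (fun j => σ j) P i b
    have h3 := hsort i hab
    simp only [Function.comp_apply] at h3
    rw [h1, h2]
    linarith
  have hsub := suppFlag_flagOf_subset B' f
  refine ⟨fun i => flagOf (B' i), fun i => isCompleteFlag_flagOf (hB'unit i), ?_⟩
  have h1 : HwSet θ (suppFlag f (fun i => flagOf (B' i))) ≤ Hw θ P' := by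
    apply HwSet_le (Hw_nonneg hθ.1 hP')
    intro Q hQ hQs
    apply dc_bound θ hθ (supp (restrictBy B' f)) P' hP' hP's hmax' hmono Q hQ
    intro α hα
    obtain ⟨γ, hγ1, hγ2⟩ := hsub (hQs α hα)
    exact ⟨γ, hγ1, hγ2⟩
  calc HwSet θ (suppFlag f fun i => flagOf (B' i)) ≤ Hw θ P' := h1
    _ = Hw θ P := hHw
    _ ≤ HwSet θ (supp (restrictBy B f)) := Hw_le_HwSet hθ.1 hP hPs

end MainArg

end Statement1Aux


open Filter Topology

/-- the upper support functional via complete flags. -/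
theorem statement1 {k : ℕ} {F : Type*} [Field F] {n : Fin k → ℕ}
    (θ : Fin k → ℝ) (hθ : IsProbDist θ)
    (f : Tensor F fun i => Fin (n i)) (hf : f ≠ 0) :
    rhoUpper θ f =
      sInf {h | ∃ W : ∀ i, ℕ → Submodule F (Fin (n i) → F),
        (∀ i, IsCompleteFlag F (W i)) ∧ h = HwSet θ (suppFlag f W)} := by
  have hθ0 := hθ.1
  have hbddB : BddBelow {h | ∃ B : ∀ i, Matrix (Fin (n i)) (Fin (n i)) F, IsBasisTuple B ∧
      h = HwSet θ (supp (restrictBy B f))} := by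
    refine ⟨0, ?_⟩
    rintro h ⟨B, hB, rfl⟩
    exact HwSet_nonneg hθ0 _
  have hbddF : BddBelow {h | ∃ W : ∀ i, ℕ → Submodule F (Fin (n i) → F),
      (∀ i, IsCompleteFlag F (W i)) ∧ h = HwSet θ (suppFlag f W)} := by
    refine ⟨0, ?_⟩
    rintro h ⟨W, hW, rfl⟩
    exact HwSet_nonneg hθ0 _
  have hneB : Set.Nonempty {h | ∃ B : ∀ i, Matrix (Fin (n i)) (Fin (n i)) F, IsBasisTuple B ∧
      h = HwSet θ (supp (restrictBy B f))} :=
    ⟨_, fun _ => (1 : Matrix _ _ F), fun _ => isUnit_one, rfl⟩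
  have hneF : Set.Nonempty {h | ∃ W : ∀ i, ℕ → Submodule F (Fin (n i) → F),
      (∀ i, IsCompleteFlag F (W i)) ∧ h = HwSet θ (suppFlag f W)} := by
    obtain ⟨W, hW, _⟩ :=
      hard_step θ hθ f hf (fun _ => (1 : Matrix _ _ F)) (fun _ => isUnit_one)
    exact ⟨_, W, hW, rfl⟩
  apply le_antisymm
  · apply le_csInf hneF
    rintro h ⟨W, hW, rfl⟩
    have hex : ∀ i, ∃ B : Matrix (Fin (n i)) (Fin (n i)) F, IsUnit B ∧
        ∀ b : Fin (n i), (fun a => B a b) ∈ W i (b : ℕ) :=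
      fun i => exists_adapted (W i) (hW i)
    choose B hBu hBmem using hex
    have hsub : supp (restrictBy B f) ⊆ suppFlag f W := by
      intro β hβ
      exact ⟨fun i => (fun a => B i a (β i)), fun i => hBmem i (β i), hβ⟩
    calc rhoUpper θ f ≤ HwSet θ (supp (restrictBy B f)) := csInf_le hbddB ⟨B, hBu, rfl⟩
      _ ≤ HwSet θ (suppFlag f W) := HwSet_mono hθ0 hsub
  · apply le_csInf hneB
    rintro h ⟨B, hB, rfl⟩
    obtain ⟨W, hW, hle⟩ := hard_step θ hθ f hf B hB
    calc sInf {h | ∃ W : ∀ i, ℕ → Submodule F (Fin (n i) → F),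
          (∀ i, IsCompleteFlag F (W i)) ∧ h = HwSet θ (suppFlag f W)}
        ≤ HwSet θ (suppFlag f W) := csInf_le hbddF ⟨W, hW, rfl⟩
      _ ≤ HwSet θ (supp (restrictBy B f)) := hle

end CVZ

end
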